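/- With p₅ and α(ψ) as above, if ψ is a skew-symmetric Lie series (ψ(x₀,x₁) = −ψ(x₁,x₀)), then α(ψ) = ψ(x₁₂,x₂₃) + ψ(x₂₃,x₃₄) + ψ(x₃₄,x₄₅) + ψ(x₄₅,x₅₁) + ψ(x₅₁,x₁₂), and α(ψ) lies in the kernel of pr_i for every i ∈ {1,…,5}; consequently α(ψ) ∈ ker(pr_i) ∩ ker(pr_j) for all i ≠ j. -/

import Mathlib

set_option linter.unusedSectionVars false
set_option maxHeartbeats 1000000

open scoped BigOperators

noncomputable section

variable (k : Type*) [Field k] [CharZero k]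

/-- the (completed) free Lie algebra on two generators, `p₄` -/
abbrev L2 := FreeLieAlgebra k (Fin 2)

def X0 : L2 k := FreeLieAlgebra.of k 0
def X1 : L2 k := FreeLieAlgebra.of k 1

/-- substitution `ψ ↦ ψ(u,v)` into a Lie series, via the universal property -/
def lsub {P : Type*} [LieRing P] [LieAlgebra k P] (u v : P) : L2 k →ₗ⁅k⁆ P :=
  FreeLieAlgebra.lift k (fun i : Fin 2 => if i = 0 then u else v)

/-- the defect `α(ψ) = ψ₄₅₁ + ψ₁₂₃ − ψ₄₃₂ − ψ₂₁₅ − ψ₅₄₃` of the pentagon equation,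
with strands `1,…,5` indexed by `0,…,4`. -/
def defect {P : Type*} [LieRing P] [LieAlgebra k P] (x : Fin 5 → Fin 5 → P)
    (ψ : L2 k) : P :=
  lsub k (x 3 4) (x 4 0) ψ + lsub k (x 0 1) (x 1 2) ψ -
    lsub k (x 3 2) (x 2 1) ψ - lsub k (x 1 0) (x 0 4) ψ - lsub k (x 4 3) (x 3 2) ψ

section Helpers

variable {P : Type*} [LieRing P] [LieAlgebra k P]

lemma lsub_X0 (u v : P) : lsub k u v (X0 k) = u := by
  simp [lsub, X0, FreeLieAlgebra.lift_of_apply]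

lemma lsub_X1 (u v : P) : lsub k u v (X1 k) = v := by
  simp [lsub, X1, FreeLieAlgebra.lift_of_apply]

lemma comp_lsub {Q : Type*} [LieRing Q] [LieAlgebra k Q] (F : P →ₗ⁅k⁆ Q) (u v : P) :
    F.comp (lsub k u v) = lsub k (F u) (F v) := by
  ext z
  fin_cases z <;> simp [lsub, FreeLieAlgebra.lift_of_apply]

lemma map_lsub {Q : Type*} [LieRing Q] [LieAlgebra k Q] (F : P →ₗ⁅k⁆ Q) (u v : P)
    (ψ : L2 k) : F (lsub k u v ψ) = lsub k (F u) (F v) ψ := by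
  rw [← comp_lsub]; rfl

lemma lsub_swap (ψ : L2 k) (hskew : lsub k (X1 k) (X0 k) ψ = -ψ) (u v : P) :
    lsub k u v ψ = - lsub k v u ψ := by
  have h : (lsub k u v : L2 k →ₗ⁅k⁆ P) = (lsub k v u).comp (lsub k (X1 k) (X0 k)) := by
    ext z
    fin_cases z <;>
      simp [lsub, X0, X1, FreeLieAlgebra.lift_of_apply]
  rw [h, LieHom.comp_apply, hskew]
  exact (lsub k v u).toLinearMap.map_neg ψ

lemma twoEq {A : Type*} [AddCommGroup A] [Module k A] {a b : A} (h : a + a = b + b) : a = b := by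
  have h2 : (2 : k) • a = (2 : k) • b := by rw [two_smul, two_smul]; exact h
  have e : a = (2 : k)⁻¹ • ((2 : k) • a) := by
    rw [smul_smul, inv_mul_cancel₀ (by norm_num : (2:k) ≠ 0), one_smul]
  rw [e, h2, smul_smul, inv_mul_cancel₀ (by norm_num : (2:k) ≠ 0), one_smul]

lemma lsub_zero_zero (ψ : L2 k) (hskew : lsub k (X1 k) (X0 k) ψ = -ψ) :
    lsub k (0 : P) 0 ψ = 0 := by
  have h := lsub_swap k ψ hskew (0 : P) 0
  refine twoEq k (a := lsub k (0:P) 0 ψ) (b := 0) ?_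
  rw [add_zero]
  nth_rewrite 1 [h]
  abel

lemma pairEq1 {A : Type*} [AddCommGroup A] [Module k A] {a b c d e f : A}
    (h1 : a + b + c = 0) (h2 : a + d + e = 0) (h3 : b + d + f = 0) (h4 : c + e + f = 0) :
    a = f := by
  apply twoEq k
  have h : a + a - (f + f) = (a + b + c) + (a + d + e) - (b + d + f) - (c + e + f) := by abel
  rw [h1, h2, h3, h4] at h
  simp only [add_zero, sub_zero, zero_add, zero_sub, neg_zero] at h
  exact sub_eq_zero.mp h

lemma pairEq3 {A : Type*} [AddCommGroup A] [Module k A] {a b c d e f : A}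
    (h1 : a + b + c = 0) (h2 : a + d + e = 0) (h3 : b + d + f = 0) (h4 : c + e + f = 0) :
    c = d := by
  apply twoEq k
  have h : c + c - (d + d) = (a + b + c) - (a + d + e) - (b + d + f) + (c + e + f) := by abel
  rw [h1, h2, h3, h4] at h
  simp only [add_zero, sub_zero, zero_add, zero_sub, neg_zero] at h
  exact sub_eq_zero.mp h

end Helpers

/-- if `ψ` is skew-symmetric, the defect `α(ψ)` takes the cyclic
form `ψ₁₂₃ + ψ₂₃₄ + ψ₃₄₅ + ψ₄₅₁ + ψ₅₁₂` and lies in the kernel of every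
strand-elimination morphism `pr_i` (i.e. it is killed by any Lie morphism
vanishing on the strand-`i` generators); consequently
`α(ψ) ∈ ker pr_i ∩ ker pr_j` for all `i ≠ j`. -/
theorem defect_cyclic_and_in_kernels
    (P : Type*) [LieRing P] [LieAlgebra k P] (x : Fin 5 → Fin 5 → P)
    (hsymm : ∀ i j, x i j = x j i) (hdiag : ∀ i, x i i = 0)
    (hsum : ∀ i, ∑ j, x i j = 0)
    (hcomm : ∀ i j l m, i ≠ l → i ≠ m → j ≠ l → j ≠ m → ⁅x i j, x l m⁆ = 0)
    (ψ : L2 k) (hskew : lsub k (X1 k) (X0 k) ψ = -ψ) :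
    defect k x ψ =
        lsub k (x 0 1) (x 1 2) ψ + lsub k (x 1 2) (x 2 3) ψ +
          lsub k (x 2 3) (x 3 4) ψ + lsub k (x 3 4) (x 4 0) ψ +
          lsub k (x 4 0) (x 0 1) ψ ∧
    (∀ (i : Fin 5) (Q : Type*) [LieRing Q] [LieAlgebra k Q] (pr : P →ₗ⁅k⁆ Q),
      (∀ j, pr (x i j) = 0) → pr (defect k x ψ) = 0) := by
  have sw := lsub_swap k (P := P) ψ hskew
  constructor
  · have e1 : lsub k (x 3 2) (x 2 1) ψ = - lsub k (x 1 2) (x 2 3) ψ := by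
      rw [hsymm 3 2, hsymm 2 1]; exact sw (x 2 3) (x 1 2)
    have e2 : lsub k (x 1 0) (x 0 4) ψ = - lsub k (x 4 0) (x 0 1) ψ := by
      rw [hsymm 1 0, hsymm 0 4]; exact sw (x 0 1) (x 4 0)
    have e3 : lsub k (x 4 3) (x 3 2) ψ = - lsub k (x 2 3) (x 3 4) ψ := by
      rw [hsymm 4 3, hsymm 3 2]; exact sw (x 3 4) (x 2 3)
    rw [defect, e1, e2, e3]
    abel
  · intro i Q _ _ pr hpr
    have swq := lsub_swap k (P := Q) ψ hskew
    have z00 := lsub_zero_zero k (P := Q) ψ hskew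
    have hzero : ∀ j, pr (x j i) = 0 := fun j => by rw [hsymm]; exact hpr j
    have hy : ∀ l m : Fin 5, pr (x l m) = pr (x m l) := fun l m => by rw [hsymm]
    have diag0 : ∀ l, pr (x l l) = 0 := fun l => by rw [hdiag]; exact pr.map_zero
    have row : ∀ l, pr (x l 0) + pr (x l 1) + pr (x l 2) + pr (x l 3) + pr (x l 4) = 0 := by
      intro l
      have h := hsum l
      rw [Fin.sum_univ_five] at h
      have h2 := congrArg pr h
      simpa only [map_add, map_zero] using h2
    have prd : pr (defect k x ψ) =
        lsub k (pr (x 3 4)) (pr (x 4 0)) ψ + lsub k (pr (x 0 1)) (pr (x 1 2)) ψ -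
          lsub k (pr (x 3 2)) (pr (x 2 1)) ψ - lsub k (pr (x 1 0)) (pr (x 0 4)) ψ -
          lsub k (pr (x 4 3)) (pr (x 3 2)) ψ := by
      simp only [defect, map_sub, map_add, map_lsub]
    rw [prd]
    fin_cases i
    · -- i = 0
      have hp : ∀ j : Fin 5, pr (x (0:Fin 5) j) = 0 := hpr
      have hz : ∀ j : Fin 5, pr (x j (0:Fin 5)) = 0 := hzero
      have r1 := row 1; have r2 := row 2; have r3 := row 3; have r4 := row 4
      simp only [hp, hz, diag0, zero_add, add_zero] at r1 r2 r3 r4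
      rw [hy 2 1] at r2
      rw [hy 3 1, hy 3 2] at r3
      rw [hy 4 1, hy 4 2, hy 4 3] at r4
      have key : pr (x 1 2) = pr (x 3 4) := pairEq1 k r1 r2 r3 r4
      simp only [hp, hz]
      rw [hy 3 2, hy 2 1, hy 4 3, key, swq (0 : Q) (pr (x 3 4)),
        swq (pr (x 2 3)) (pr (x 3 4)), z00]
      abel
    · -- i = 1
      have hp : ∀ j : Fin 5, pr (x (1:Fin 5) j) = 0 := hpr
      have hz : ∀ j : Fin 5, pr (x j (1:Fin 5)) = 0 := hzero
      have r1 := row 0; have r2 := row 2; have r3 := row 3; have r4 := row 4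
      simp only [hp, hz, diag0, zero_add, add_zero] at r1 r2 r3 r4
      rw [hy 2 0] at r2
      rw [hy 3 0, hy 3 2] at r3
      rw [hy 4 0, hy 4 2, hy 4 3] at r4
      have key : pr (x 0 4) = pr (x 2 3) := pairEq3 k r1 r2 r3 r4
      simp only [hp, hz]
      rw [hy 4 0, hy 3 2, hy 4 3, key, swq (0 : Q) (pr (x 2 3)), z00]
      abel
    · -- i = 2
      have hp : ∀ j : Fin 5, pr (x (2:Fin 5) j) = 0 := hpr
      have hz : ∀ j : Fin 5, pr (x j (2:Fin 5)) = 0 := hzero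
      have r1 := row 0; have r2 := row 1; have r3 := row 3; have r4 := row 4
      simp only [hp, hz, diag0, zero_add, add_zero] at r1 r2 r3 r4
      rw [hy 1 0] at r2
      rw [hy 3 0, hy 3 1] at r3
      rw [hy 4 0, hy 4 1, hy 4 3] at r4
      have key : pr (x 0 1) = pr (x 3 4) := pairEq1 k r1 r2 r3 r4
      simp only [hp, hz]
      rw [hy 4 0, hy 1 0, hy 4 3, key, z00]
      abel
    · -- i = 3
      have hp : ∀ j : Fin 5, pr (x (3:Fin 5) j) = 0 := hpr
      have hz : ∀ j : Fin 5, pr (x j (3:Fin 5)) = 0 := hzero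
      have r1 := row 0; have r2 := row 1; have r3 := row 2; have r4 := row 4
      simp only [hp, hz, diag0, zero_add, add_zero] at r1 r2 r3 r4
      rw [hy 1 0] at r2
      rw [hy 2 0, hy 2 1] at r3
      rw [hy 4 0, hy 4 1, hy 4 2] at r4
      have key : pr (x 0 4) = pr (x 1 2) := pairEq3 k r1 r2 r3 r4
      simp only [hp, hz]
      rw [hy 4 0, hy 2 1, hy 1 0, key, z00]
      abel
    · -- i = 4
      have hp : ∀ j : Fin 5, pr (x (4:Fin 5) j) = 0 := hpr
      have hz : ∀ j : Fin 5, pr (x j (4:Fin 5)) = 0 := hzero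
      have r1 := row 0; have r2 := row 1; have r3 := row 2; have r4 := row 3
      simp only [hp, hz, diag0, zero_add, add_zero] at r1 r2 r3 r4
      rw [hy 1 0] at r2
      rw [hy 2 0, hy 2 1] at r3
      rw [hy 3 0, hy 3 1, hy 3 2] at r4
      have key : pr (x 0 1) = pr (x 2 3) := pairEq1 k r1 r2 r3 r4
      simp only [hp, hz]
      rw [hy 3 2, hy 2 1, hy 1 0, key, swq (0 : Q) (pr (x 2 3)), z00]
      abel
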